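/- Let d ≥ 2, k ≥ 3 and let X_1,…,X_d be formal variables. With C = {u ∈ ℤ≥0^d : k·u_i ≥ u_d for i = 1,…,d−1}, the generating function ∑_{y ∈ C} X_1^{y_1}⋯X_d^{y_d} equals (1 + X_1⋯X_d·(1 + X_d + ⋯ + X_d^{k−2})) / ((1−X_1)⋯(1−X_{d−1})·(1 − X_1⋯X_{d−1}X_d^k)) as formal power series (or for |X_i| < 1). -/

import Mathlib

open scoped Classical

/-- The multivariate power series `∑_{y ∈ C} X₁^{y₁}⋯X_d^{y_d}` over the lattice
points of the cone `C = {y ∈ ℤ≥0^d : k·yᵢ ≥ y_d for i = 1,…,d−1}`. -/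
noncomputable def coneSeries (d k : ℕ) (hd : 2 ≤ d) : MvPowerSeries (Fin d) ℚ :=
  fun y : Fin d →₀ ℕ =>
    if ∀ i : Fin d, i.val < d - 1 → y ⟨d - 1, by omega⟩ ≤ k * y i then 1 else 0

/-- Auxiliary series: coordinates in `J` are forced to be minimal. -/
noncomputable def auxB (d k : ℕ) (e : Fin d) (J : Finset (Fin d)) :
    MvPowerSeries (Fin d) ℚ :=
  fun y => if (∀ i ∈ J, y e ≤ k * y i ∧ k * y i < y e + k) ∧
      (∀ i : Fin d, i.val < d - 1 → i ∉ J → y e ≤ k * y i) then 1 else 0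

lemma coeff_auxB (d k : ℕ) (e : Fin d) (J : Finset (Fin d)) (y : Fin d →₀ ℕ) :
    MvPowerSeries.coeff y (auxB d k e J) =
      if (∀ i ∈ J, y e ≤ k * y i ∧ k * y i < y e + k) ∧
        (∀ i : Fin d, i.val < d - 1 → i ∉ J → y e ≤ k * y i) then 1 else 0 := rfl

lemma auxB_step (d k : ℕ) (hk : 0 < k) (e j : Fin d) (he : e.val = d - 1)
    (hj : j.val < d - 1) (J : Finset (Fin d)) (hjJ : j ∉ J) :
    (1 - MvPowerSeries.X j) * auxB d k e J = auxB d k e (insert j J) := by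
  have hje : j ≠ e := fun h => by rw [h] at hj; omega
  ext y
  rw [sub_mul, one_mul, map_sub, MvPowerSeries.X, MvPowerSeries.coeff_monomial_mul]
  simp only [coeff_auxB, one_mul, Finsupp.single_le_iff]
  set m := y e with hm
  have hy'e : ((y - Finsupp.single j 1 : Fin d →₀ ℕ)) e = m := by
    rw [Finsupp.tsub_apply, Finsupp.single_eq_of_ne' hje, Nat.sub_zero]
  have hy'j : ((y - Finsupp.single j 1 : Fin d →₀ ℕ)) j = y j - 1 := by
    rw [Finsupp.tsub_apply, Finsupp.single_eq_same]
  have hy'i : ∀ i : Fin d, i ≠ j → ((y - Finsupp.single j 1 : Fin d →₀ ℕ)) i = y i := fun i hi => by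
    rw [Finsupp.tsub_apply, Finsupp.single_eq_of_ne' (Ne.symm hi), Nat.sub_zero]
  set P : Prop := (∀ i ∈ J, m ≤ k * y i ∧ k * y i < m + k) ∧
      (∀ i : Fin d, i.val < d - 1 → i ∉ J → i ≠ j → m ≤ k * y i)
  have e2 : ((∀ i ∈ insert j J, m ≤ k * y i ∧ k * y i < m + k) ∧
      (∀ i : Fin d, i.val < d - 1 → i ∉ insert j J → m ≤ k * y i)) ↔
      P ∧ (m ≤ k * y j ∧ k * y j < m + k) := by
    constructor
    · rintro ⟨h1, h2⟩
      exact ⟨⟨fun i hi => h1 i (Finset.mem_insert_of_mem hi),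
        fun i hi hiJ hij => h2 i hi (by simp [Finset.mem_insert, hij, hiJ])⟩,
        h1 j (Finset.mem_insert_self j J)⟩
    · rintro ⟨⟨h1, h2⟩, h3⟩
      refine ⟨fun i hi => ?_, fun i hi hiJ => ?_⟩
      · rcases Finset.mem_insert.mp hi with h | h
        · rw [h]; exact h3
        · exact h1 i h
      · have hij : i ≠ j := fun h => hiJ (h ▸ Finset.mem_insert_self j J)
        exact h2 i hi (fun h => hiJ (Finset.mem_insert_of_mem h)) hij
  have e1 : ((∀ i ∈ J, m ≤ k * y i ∧ k * y i < m + k) ∧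
      (∀ i : Fin d, i.val < d - 1 → i ∉ J → m ≤ k * y i)) ↔ P ∧ m ≤ k * y j := by
    constructor
    · rintro ⟨h1, h2⟩; exact ⟨⟨h1, fun i hi hiJ _ => h2 i hi hiJ⟩, h2 j hj hjJ⟩
    · rintro ⟨⟨h1, h2⟩, h3⟩
      refine ⟨h1, fun i hi hiJ => ?_⟩
      by_cases hij : i = j
      · rw [hij]; exact h3
      · exact h2 i hi hiJ hij
  have e3 : ((∀ i ∈ J, ((y - Finsupp.single j 1 : Fin d →₀ ℕ)) e ≤ k * ((y - Finsupp.single j 1 : Fin d →₀ ℕ)) i ∧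
        k * ((y - Finsupp.single j 1 : Fin d →₀ ℕ)) i < ((y - Finsupp.single j 1 : Fin d →₀ ℕ)) e + k) ∧
      (∀ i : Fin d, i.val < d - 1 → i ∉ J →
        ((y - Finsupp.single j 1 : Fin d →₀ ℕ)) e ≤ k * ((y - Finsupp.single j 1 : Fin d →₀ ℕ)) i)) ↔
      P ∧ m ≤ k * (y j - 1) := by
    rw [hy'e]
    constructor
    · rintro ⟨h1, h2⟩
      refine ⟨⟨fun i hi => ?_, fun i hi hiJ hij => ?_⟩, ?_⟩
      · have h := h1 i hi; rwa [hy'i i (fun h' => hjJ (h' ▸ hi))] at h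
      · have h := h2 i hi hiJ; rwa [hy'i i hij] at h
      · have h := h2 j hj hjJ; rwa [hy'j] at h
    · rintro ⟨⟨h1, h2⟩, h3⟩
      refine ⟨fun i hi => ?_, fun i hi hiJ => ?_⟩
      · rw [hy'i i (fun h' => hjJ (h' ▸ hi))]; exact h1 i hi
      · by_cases hij : i = j
        · rw [hij, hy'j]; exact h3
        · rw [hy'i i hij]; exact h2 i hi hiJ hij
  simp only [e1, e2, e3]
  by_cases hPP : P
  · have hand : ∀ x : Prop, (P ∧ x) ↔ x := fun x => and_iff_right hPP
    simp only [hand]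
    have hms : k * (y j - 1) = k * y j - k := by rw [Nat.mul_sub, mul_one]
    rw [hms]
    by_cases hyj : 1 ≤ y j
    · have h2 : k ≤ k * y j := Nat.le_mul_of_pos_right k hyj
      rw [if_pos hyj]
      generalize k * y j = K at h2 ⊢
      split_ifs <;> first | (exfalso; omega) | norm_num
    · rw [if_neg hyj]
      have h0 : y j = 0 := by omega
      rw [h0, Nat.mul_zero]
      split_ifs <;> first | (exfalso; omega) | norm_num
  · have hand : ∀ x : Prop, (P ∧ x) ↔ False := fun x => iff_false_intro (fun h => hPP h.1)
    simp only [hand, if_false]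
    split_ifs <;> norm_num

lemma prod_mul_cone (d k : ℕ) (hd : 2 ≤ d) (hk : 0 < k) (J : Finset (Fin d)) :
    (∀ i ∈ J, i.val < d - 1) →
    (∏ i ∈ J, (1 - MvPowerSeries.X i)) * coneSeries d k hd =
      auxB d k ⟨d - 1, Nat.sub_lt (by omega) Nat.one_pos⟩ J := by
  classical
  induction J using Finset.induction_on with
  | empty =>
    intro _
    rw [Finset.prod_empty, one_mul]
    ext y
    rw [coeff_auxB]
    have hc : MvPowerSeries.coeff y (coneSeries d k hd) =
        if ∀ i : Fin d, i.val < d - 1 → y ⟨d - 1, by omega⟩ ≤ k * y i then 1 else 0 := rfl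
    rw [hc]
    refine if_congr ?_ rfl rfl
    simp
  | insert j s hjs ih =>
    intro hJ
    rw [Finset.prod_insert hjs, mul_assoc,
      ih (fun i hi => hJ i (Finset.mem_insert_of_mem hi)),
      auxB_step d k hk _ _ rfl (hJ _ (Finset.mem_insert_self _ _)) _ hjs]

lemma prod_X_monomial {σ : Type*} (s : Finset σ) :
    (∏ i ∈ s, MvPowerSeries.X i : MvPowerSeries σ ℚ) =
      MvPowerSeries.monomial (∑ i ∈ s, Finsupp.single i 1) 1 := by
  classical
  induction s using Finset.induction_on with
  | empty => simp [MvPowerSeries.monomial_zero_one]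
  | insert _ _ h ih =>
    rw [Finset.prod_insert h, Finset.sum_insert h, ih, MvPowerSeries.X,
      MvPowerSeries.monomial_mul_monomial, one_mul]

lemma final_lemma (d k : ℕ) (hd : 2 ≤ d) (hk : 3 ≤ k) (e : Fin d) (he : e.val = d - 1) :
    auxB d k e (Finset.univ.filter (fun i : Fin d => i.val < d - 1)) *
      (1 - (∏ i ∈ Finset.univ.filter (fun i : Fin d => i.val < d - 1),
          MvPowerSeries.X i) * MvPowerSeries.X e ^ k) =
    1 + (∏ i : Fin d, MvPowerSeries.X i) *
      ∑ j ∈ Finset.range (k - 1),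
        (MvPowerSeries.X e : MvPowerSeries (Fin d) ℚ) ^ j := by
  classical
  have hk0 : 0 < k := by omega
  set I := Finset.univ.filter (fun i : Fin d => i.val < d - 1) with hI
  set u : Fin d →₀ ℕ := ∑ i : Fin d, Finsupp.single i 1 with hu
  set w : Fin d →₀ ℕ := (∑ i ∈ I, Finsupp.single i 1) + Finsupp.single e k with hw
  have hsumI : ∀ (s : Finset (Fin d)) (i : Fin d),
      (∑ x ∈ s, Finsupp.single x 1) i = if i ∈ s then 1 else 0 := by
    intro s i
    rw [Finset.sum_apply']
    simp only [Finsupp.single_apply]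
    exact Finset.sum_ite_eq' s i (fun _ => 1)
  have hiE : ∀ i : Fin d, ¬(i.val < d - 1) → i = e := by
    intro i hi
    have := i.isLt
    exact Fin.ext (by omega)
  have huv : ∀ i : Fin d, u i = 1 := by
    intro i; rw [hu, hsumI, if_pos (Finset.mem_univ i)]
  have hwv : ∀ i : Fin d, w i = if i.val < d - 1 then 1 else k := by
    intro i
    rw [hw, Finsupp.add_apply, hsumI]
    by_cases hi : i.val < d - 1
    · have hie : e ≠ i := fun h => by rw [← h] at hi; omega
      rw [if_pos (by simp [hI, hi]), Finsupp.single_eq_of_ne' hie, if_pos hi]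
      omega
    · rw [if_neg (by simp [hI, hi]), hiE i hi, Finsupp.single_eq_same,
        if_neg (by rw [hiE i hi] at hi; exact hi)]
      omega
  rw [mul_one_sub]
  simp only [prod_X_monomial, MvPowerSeries.X_pow_eq,
    MvPowerSeries.monomial_mul_monomial, one_mul, mul_one, Finset.mul_sum]
  ext y
  rw [map_sub, map_add, map_sum]
  simp only [coeff_auxB, MvPowerSeries.coeff_mul_monomial, MvPowerSeries.coeff_one,
    MvPowerSeries.coeff_monomial, mul_one]
  have hCA : ∀ z : Fin d →₀ ℕ,
      ((∀ i ∈ I, z e ≤ k * z i ∧ k * z i < z e + k) ∧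
        (∀ i : Fin d, i.val < d - 1 → i ∉ I → z e ≤ k * z i)) ↔
      (∀ i : Fin d, i.val < d - 1 → (z e ≤ k * z i ∧ k * z i < z e + k)) := by
    intro z
    constructor
    · rintro ⟨h1, _⟩ i hi; exact h1 i (by simp [hI, hi])
    · intro h
      exact ⟨fun i hi => h i (by simpa [hI] using hi),
        fun i hi hiI => absurd (by simp [hI, hi]) hiI⟩
  simp only [hCA]
  set m := y e with hm
  have hyu : ∀ j : ℕ, y = u + Finsupp.single e j ↔
      ((∀ i : Fin d, i.val < d - 1 → y i = 1) ∧ m = j + 1) := by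
    intro j
    rw [Finsupp.ext_iff]
    constructor
    · intro h
      refine ⟨fun i hi => ?_, ?_⟩
      · have hie : e ≠ i := fun h' => by rw [← h'] at hi; omega
        have hh := h i
        rw [Finsupp.add_apply, huv, Finsupp.single_apply, if_neg hie] at hh
        omega
      · have hh := h e
        rw [Finsupp.add_apply, huv, Finsupp.single_eq_same] at hh
        omega
    · rintro ⟨h1, h2⟩ i
      rw [Finsupp.add_apply, huv, Finsupp.single_apply]
      by_cases hi : i.val < d - 1
      · have hie : e ≠ i := fun h' => by rw [← h'] at hi; omega
        rw [if_neg hie]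
        have := h1 i hi; omega
      · have hie : i = e := hiE i hi
        rw [if_pos hie.symm, hie]
        omega
  have hsum : (∑ j ∈ Finset.range (k - 1),
        if y = u + Finsupp.single e j then (1 : ℚ) else 0)
      = if (∀ i : Fin d, i.val < d - 1 → y i = 1) ∧ (1 ≤ m ∧ m ≤ k - 1)
        then 1 else 0 := by
    simp only [hyu]
    by_cases hC : ∀ i : Fin d, i.val < d - 1 → y i = 1
    · have hand : ∀ x : Prop, ((∀ i : Fin d, i.val < d - 1 → y i = 1) ∧ x) ↔ x :=
        fun x => and_iff_right hC
      simp only [hand]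
      by_cases hm1 : 1 ≤ m
      · have hiff : ∀ j : ℕ, (m = j + 1) ↔ (j = m - 1) := fun j => by omega
        simp only [hiff]
        rw [Finset.sum_ite_eq' (Finset.range (k - 1)) (m - 1) (fun _ => (1 : ℚ))]
        refine if_congr ?_ rfl rfl
        rw [Finset.mem_range]
        omega
      · rw [Finset.sum_eq_zero (fun j _ => if_neg (by omega)), if_neg (fun h => hm1 h.1)]
    · rw [Finset.sum_eq_zero (fun j _ => if_neg (fun h => hC h.1)),
        if_neg (fun h => hC h.1)]
  rw [hsum]
  have hwle : w ≤ y ↔ ((∀ i : Fin d, i.val < d - 1 → 1 ≤ y i) ∧ k ≤ m) := by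
    rw [Finsupp.le_def]
    constructor
    · intro h
      refine ⟨fun i hi => ?_, ?_⟩
      · have hh := h i; rwa [hwv, if_pos hi] at hh
      · have hh := h e; rwa [hwv, if_neg (by omega)] at hh
    · rintro ⟨h1, h2⟩ i
      rw [hwv]
      by_cases hi : i.val < d - 1
      · rw [if_pos hi]; exact h1 i hi
      · rw [if_neg hi, hiE i hi]; exact h2
  have hywe : (y - w) e = m - k := by
    rw [Finsupp.tsub_apply, hwv, if_neg (by omega)]
  have hywi : ∀ i : Fin d, i.val < d - 1 → (y - w) i = y i - 1 := by
    intro i hi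
    rw [Finsupp.tsub_apply, hwv, if_pos hi]
  by_cases hwy : w ≤ y
  · obtain ⟨h1, hkm⟩ := hwle.mp hwy
    have hA' : (∀ i : Fin d, i.val < d - 1 →
        ((y - w) e ≤ k * (y - w) i ∧ k * (y - w) i < (y - w) e + k)) ↔
        (∀ i : Fin d, i.val < d - 1 → (m ≤ k * y i ∧ k * y i < m + k)) := by
      constructor <;> intro h i hi <;> have hh := h i hi <;>
        have hki : k ≤ k * y i := Nat.le_mul_of_pos_right k (h1 i hi) <;>
        rw [hywe, hywi i hi, Nat.mul_sub, mul_one] at * <;> omega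
    rw [if_pos hwy]
    have hy0 : ¬(y = 0) := by
      intro h
      have : m = 0 := by rw [hm, h]; rfl
      omega
    have hc2 : ¬((∀ i : Fin d, i.val < d - 1 → y i = 1) ∧ (1 ≤ m ∧ m ≤ k - 1)) := by
      rintro ⟨_, _, h⟩; omega
    rw [if_neg hy0, if_neg hc2]
    by_cases hAy : ∀ i : Fin d, i.val < d - 1 → (m ≤ k * y i ∧ k * y i < m + k)
    · rw [if_pos hAy, if_pos (hA'.mpr hAy)]; norm_num
    · rw [if_neg hAy, if_neg (fun h => hAy (hA'.mp h))]; norm_num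
  · rw [if_neg hwy]
    by_cases hAy : ∀ i : Fin d, i.val < d - 1 → (m ≤ k * y i ∧ k * y i < m + k)
    · by_cases hm0 : m = 0
      · have hyi0 : ∀ i : Fin d, i.val < d - 1 → y i = 0 := by
          intro i hi
          have hh := (hAy i hi).2
          by_contra h0
          have : k ≤ k * y i := Nat.le_mul_of_pos_right k (by omega)
          omega
        have hy0 : y = 0 := by
          ext i
          by_cases hi : i.val < d - 1
          · exact hyi0 i hi
          · rw [hiE i hi]; exact hm0
        rw [if_pos hAy, if_pos hy0, if_neg (fun h => by omega)]
        norm_num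
      · have hm1 : 1 ≤ m := by omega
        have hyi1 : ∀ i : Fin d, i.val < d - 1 → 1 ≤ y i := by
          intro i hi
          have hh := (hAy i hi).1
          by_contra h0
          have : y i = 0 := by omega
          rw [this, Nat.mul_zero] at hh
          omega
        have hmk : m < k := by
          rcases (not_and_or.mp (fun h => hwy (hwle.mpr h))) with h | h
          · exact absurd hyi1 h
          · omega
        have hyi : ∀ i : Fin d, i.val < d - 1 → y i = 1 := by
          intro i hi
          have hh := (hAy i hi).2
          have h2 := hyi1 i hi
          by_contra h0
          have h3 : 2 ≤ y i := by omega
          have : k * 2 ≤ k * y i := Nat.mul_le_mul_left k h3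
          omega
        have hy0 : ¬(y = 0) := by
          intro h
          have : m = 0 := by rw [hm, h]; rfl
          omega
        rw [if_pos hAy, if_neg hy0, if_pos ⟨hyi, hm1, by omega⟩]
        norm_num
    · rw [if_neg hAy]
      have hy0 : ¬(y = 0) := by
        intro h
        apply hAy
        intro i hi
        rw [hm, h]
        simp [hk0]
      have hc2 : ¬((∀ i : Fin d, i.val < d - 1 → y i = 1) ∧ (1 ≤ m ∧ m ≤ k - 1)) := by
        rintro ⟨hA1, hA2, hA3⟩
        apply hAy
        intro i hi
        rw [hA1 i hi, Nat.mul_one]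
        omega
      rw [if_neg hy0, if_neg hc2]
      norm_num

/-- As formal power series,
`(1−X₁)⋯(1−X_{d−1})·(1 − X₁⋯X_{d−1}X_d^k) · ∑_{y∈C} X^y
  = 1 + X₁⋯X_d·(1 + X_d + ⋯ + X_d^{k−2})`. -/
theorem stmt2 (d k : ℕ) (hd : 2 ≤ d) (hk : 3 ≤ k) :
    ((∏ i ∈ Finset.univ.filter (fun i : Fin d => i.val < d - 1),
          (1 - MvPowerSeries.X i)) *
        (1 - (∏ i ∈ Finset.univ.filter (fun i : Fin d => i.val < d - 1),
            MvPowerSeries.X i) * (MvPowerSeries.X (⟨d - 1, by omega⟩ : Fin d)) ^ k)) *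
      coneSeries d k hd =
    1 + (∏ i : Fin d, MvPowerSeries.X i) *
      ∑ j ∈ Finset.range (k - 1),
        (MvPowerSeries.X (⟨d - 1, by omega⟩ : Fin d) : MvPowerSeries (Fin d) ℚ) ^ j := by
  rw [mul_right_comm,
    prod_mul_cone d k hd (by omega) _ (fun i hi => (Finset.mem_filter.mp hi).2)]
  exact final_lemma d k hd hk ⟨d - 1, by omega⟩ rfl
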